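/- Let a ∈ ℂ with Re a > 1/2, let 0 < r < Re a − 1/2, let n ≥ 1, ω = e^{2πi/n}, and set s_j = a + r ω^j for 1 ≤ j ≤ n. Define the finite Blaschke-type product B(s) = ((s−a)^n − r^n)/((s + conj(a) − 1)^n − r^n) for the half-plane Re s > 1/2. Then there exist constants c > 0 and 0 < ρ < 1, depending only on a and r (not on n), such that (2 Re s_j − 1)|B′(s_j)| ≥ c ρ^n for every j. -/

import Mathlib

open Complex

/-- Uniform separation constant of the points `s_j = a + r ω^j` (with
`ω = e^{2πi/n}`) for the finite half-plane Blaschke product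
`B(s) = ((s−a)^n − r^n)/((s + conj a − 1)^n − r^n)`: there are constants
`c > 0` and `0 < ρ < 1`, depending only on `a` and `r`, such that
`(2 Re s_j − 1)|B′(s_j)| ≥ c ρ^n` for every `j`. -/
theorem blaschke_separation_lower_bound
    (a : ℂ) (ha : 1 / 2 < a.re) (r : ℝ) (hr0 : 0 < r) (hr1 : r < a.re - 1 / 2) :
    ∃ c ρ : ℝ, 0 < c ∧ 0 < ρ ∧ ρ < 1 ∧
      ∀ n : ℕ, 1 ≤ n → ∀ j : ℕ, 1 ≤ j → j ≤ n →
        let ω : ℂ := Complex.exp (2 * Real.pi * I / n)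
        let s : ℂ := a + (r : ℂ) * ω ^ j
        c * ρ ^ n ≤ (2 * s.re - 1) *
          ‖deriv (fun z : ℂ =>
            ((z - a) ^ n - (r : ℂ) ^ n) /
              ((z + (starRingEnd ℂ) a - 1) ^ n - (r : ℂ) ^ n)) s‖ := by
  set d : ℝ := 2 * a.re - 1 with hd_def
  have hd : 0 < d := by simp [hd_def]; linarith
  have h2r : 2 * r < d := by simp [hd_def]; linarith
  refine ⟨(d - 2*r) / (2*r), r / (d + r), div_pos (by linarith) (by linarith), by positivity, ?_, ?_⟩
  · rw [div_lt_one (by linarith)]; linarith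
  intro n hn j hj1 hj2 ω s
  have hn0 : (n : ℂ) ≠ 0 := Nat.cast_ne_zero.2 (by omega)
  -- ω^n = 1
  have hωn : ω ^ n = 1 := by
    rw [show ω = Complex.exp (2 * Real.pi * I / n) from rfl, ← Complex.exp_nat_mul,
      mul_div_cancel₀ _ hn0, Complex.exp_two_pi_mul_I]
  have habsω : ‖ω‖ = 1 := by
    have : ω = Complex.exp ((2 * Real.pi / n : ℝ) * I) := by
      rw [show ω = Complex.exp (2 * Real.pi * I / n) from rfl]
      push_cast; ring_nf
    rw [this, Complex.norm_exp_ofReal_mul_I]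
  have habsωj : ‖ω ^ j‖ = 1 := by rw [norm_pow, habsω, one_pow]
  have hsa : s - a = (r : ℂ) * ω ^ j := by
    rw [show s = a + (r : ℂ) * ω ^ j from rfl]; ring
  have hN : (s - a) ^ n - (r : ℂ) ^ n = 0 := by
    rw [hsa, mul_pow, ← pow_mul, mul_comm j n, pow_mul, hωn, one_pow, mul_one, sub_self]
  have hw : s + (starRingEnd ℂ) a - 1 = (d : ℂ) + (r : ℂ) * ω ^ j := by
    rw [show s = a + (r : ℂ) * ω ^ j from rfl]
    have hc := Complex.add_conj a
    push_cast [hd_def] at hc ⊢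
    linear_combination hc
  set w : ℂ := (d : ℂ) + (r : ℂ) * ω ^ j with hwdef
  have habsw_le : ‖w‖ ≤ d + r := by
    calc ‖w‖ ≤ ‖(d : ℂ)‖ + ‖(r : ℂ) * ω ^ j‖ :=
          norm_add_le _ _
    _ = d + r := by
        rw [norm_mul, habsωj, mul_one, Complex.norm_real, Real.norm_eq_abs, Complex.norm_real, Real.norm_eq_abs,
          abs_of_pos hd, abs_of_pos hr0]
  have habsw_ge : d - r ≤ ‖w‖ := by
    have : ‖(d : ℂ)‖ ≤ ‖w‖ + ‖(r : ℂ) * ω ^ j‖ := by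
      calc ‖(d : ℂ)‖ = ‖w - (r : ℂ) * ω ^ j‖ := by rw [hwdef]; ring_nf
      _ ≤ _ := by exact (norm_sub_le _ _)
    rw [norm_mul, habsωj, mul_one, Complex.norm_real, Real.norm_eq_abs, Complex.norm_real, Real.norm_eq_abs,
      abs_of_pos hd, abs_of_pos hr0] at this
    linarith
  have hrw : r < ‖w‖ := by linarith
  have hD_ne : w ^ n - (r : ℂ) ^ n ≠ 0 := by
    intro h
    have h' : w ^ n = (r : ℂ) ^ n := by linear_combination h
    have : ‖w‖ ^ n = r ^ n := by
      rw [← norm_pow, h', norm_pow, Complex.norm_real, Real.norm_eq_abs, abs_of_pos hr0]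
    have h2 : r ^ n < ‖w‖ ^ n :=
      pow_lt_pow_left₀ hrw (le_of_lt hr0) (by omega)
    linarith
  have hDw_ne : (s + (starRingEnd ℂ) a - 1) ^ n - (r : ℂ) ^ n ≠ 0 := by
    rw [hw]; exact hD_ne
  have habsD_pos : 0 < ‖w ^ n - (r : ℂ) ^ n‖ := norm_pos_iff.mpr hD_ne
  have habsD_le : ‖w ^ n - (r : ℂ) ^ n‖ ≤ 2 * (d + r) ^ n := by
    calc ‖w ^ n - (r : ℂ) ^ n‖
        ≤ ‖w ^ n‖ + ‖(r : ℂ) ^ n‖ := norm_sub_le _ _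
    _ = ‖w‖ ^ n + r ^ n := by
        rw [norm_pow, norm_pow, Complex.norm_real, Real.norm_eq_abs, abs_of_pos hr0]
    _ ≤ (d + r) ^ n + (d + r) ^ n := by
        gcongr <;> linarith
    _ = 2 * (d + r) ^ n := by ring
  -- the derivative
  have hderivN : HasDerivAt (fun z : ℂ => (z - a) ^ n - (r : ℂ) ^ n)
      ((n : ℂ) * (s - a) ^ (n - 1)) s := by
    have h1 : HasDerivAt (fun z : ℂ => z - a) 1 s := (hasDerivAt_id s).sub_const a
    simpa using (h1.pow n).sub_const ((r : ℂ) ^ n)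
  have hderivD : HasDerivAt (fun z : ℂ => (z + (starRingEnd ℂ) a - 1) ^ n - (r : ℂ) ^ n)
      ((n : ℂ) * (s + (starRingEnd ℂ) a - 1) ^ (n - 1)) s := by
    have h1 : HasDerivAt (fun z : ℂ => z + (starRingEnd ℂ) a - 1) 1 s :=
      ((hasDerivAt_id s).add_const _).sub_const 1
    simpa using (h1.pow n).sub_const ((r : ℂ) ^ n)
  have hB : HasDerivAt (fun z : ℂ =>
      ((z - a) ^ n - (r : ℂ) ^ n) / ((z + (starRingEnd ℂ) a - 1) ^ n - (r : ℂ) ^ n)) _ s :=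
    hderivN.div hderivD hDw_ne
  have hderiv : deriv (fun z : ℂ =>
      ((z - a) ^ n - (r : ℂ) ^ n) / ((z + (starRingEnd ℂ) a - 1) ^ n - (r : ℂ) ^ n)) s
      = (n : ℂ) * (s - a) ^ (n - 1) / (w ^ n - (r : ℂ) ^ n) := by
    rw [hB.deriv, hN, hw]
    field_simp
    ring
  have habsderiv : ‖deriv (fun z : ℂ =>
      ((z - a) ^ n - (r : ℂ) ^ n) / ((z + (starRingEnd ℂ) a - 1) ^ n - (r : ℂ) ^ n)) s‖
      = n * r ^ (n - 1) / ‖w ^ n - (r : ℂ) ^ n‖ := by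
    rw [hderiv, norm_div, norm_mul, norm_pow, hsa, norm_mul, habsωj, mul_one,
      Complex.norm_real, Real.norm_eq_abs, abs_of_pos hr0, Complex.norm_natCast]
  -- real part bound
  have hre : 2 * s.re - 1 = d + 2 * r * (ω ^ j).re := by
    rw [show s = a + (r : ℂ) * ω ^ j from rfl]
    simp [Complex.add_re, Complex.re_ofReal_mul, hd_def]
    ring
  have hreω : -1 ≤ (ω ^ j).re := by
    have := Complex.abs_re_le_norm (ω ^ j)
    rw [habsωj] at this
    cases' abs_le.1 this with h1 h2
    linarith
  have hre_ge : d - 2 * r ≤ 2 * s.re - 1 := by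
    rw [hre]; nlinarith
  rw [habsderiv]
  have key : (d - 2*r) * (r ^ (n-1) / (2 * (d + r) ^ n))
      ≤ (2 * s.re - 1) * (n * r ^ (n - 1) / ‖w ^ n - (r : ℂ) ^ n‖) := by
    apply mul_le_mul hre_ge _ (by positivity) (by linarith)
    have h1 : (r : ℝ) ^ (n-1) ≤ n * r ^ (n-1) := by
      nlinarith [pow_pos hr0 (n-1), (by exact_mod_cast hn : (1:ℝ) ≤ (n:ℝ))]
    gcongr
  refine le_trans (le_of_eq ?_) key
  have hn1 : n - 1 + 1 = n := by omega
  have hrn : r ^ n = r * r ^ (n-1) := by rw [← pow_succ', hn1]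
  rw [div_pow, hrn]
  field_simp
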